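/- Let $p \in (0,1)$, and let $(\hat{S}_n)$ and $(\check{S}_n)$ be the positively reinforced and counterbalanced random walks built from the same i.i.d. centred steps and the same reinforcement randomness. Then for $k \geq 2$, $\mathbb{E}(\check{X}_k\hat{X}_k \mid \mathcal{F}_{k-1}) = (1-p)\sigma^2 - \frac{p}{k-1}\sum_{j=1}^{k-1}\check{X}_j\hat{X}_j$. -/

import Mathlib

open MeasureTheory ProbabilityTheory Filter Finset

private lemma memL2_mul_integrable' {Ω : Type*} {mΩ : MeasurableSpace Ω} {P : Measure Ω}
    {f g : Ω → ℝ} (hf : MemLp f 2 P) (hg : MemLp g 2 P) :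
    Integrable (fun ω => f ω * g ω) P := by
  refine Integrable.mono' ((hf.integrable_sq.add hg.integrable_sq).div_const 2)
    (hf.aestronglyMeasurable.mul hg.aestronglyMeasurable) (ae_of_all _ fun ω => ?_)
  simp only [Real.norm_eq_abs, abs_mul, Pi.add_apply, Pi.div_apply]
  nlinarith [sq_nonneg (|f ω| - |g ω|), abs_nonneg (f ω), abs_nonneg (g ω),
    sq_abs (f ω), sq_abs (g ω)]


/-- for the positively reinforced and counterbalanced random walks
built from the same i.i.d. centred steps and reinforcement randomness, for
`k ≥ 2`,
`E(X̌ₖ X̂ₖ | ℱ_{k-1}) = (1-p)σ² - (p/(k-1)) ∑_{j=1}^{k-1} X̌ⱼ X̂ⱼ`. -/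
theorem cross_step_conditional_expectation
    {Ω : Type*} {mΩ : MeasurableSpace Ω} (P : Measure Ω) [IsProbabilityMeasure P]
    (ℱ : Filtration ℕ mΩ)
    (p σ : ℝ) (hp : p ∈ Set.Ioo (0 : ℝ) 1)
    (X hatX checkX : ℕ → Ω → ℝ) (ε : ℕ → Ω → Bool) (U : ℕ → Ω → ℕ)
    (hXL2 : ∀ k, MemLp (X k) 2 P)
    (hhatL2 : ∀ k, MemLp (hatX k) 2 P) (hcheckL2 : ∀ k, MemLp (checkX k) 2 P)
    (hXmeas : ∀ k, Measurable (X k)) (hεmeas : ∀ k, Measurable (ε k))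
    (hUmeas : ∀ k, Measurable (U k))
    (hhatadapt : Adapted ℱ hatX) (hcheckadapt : Adapted ℱ checkX)
    -- the same `εₖ` and `U[k-1]` are used for both walks
    (hhatdef : ∀ k : ℕ, 2 ≤ k → ∀ ω, hatX k ω =
      if ε k ω = true then hatX (U (k - 1) ω) ω else X k ω)
    (hcheckdef : ∀ k : ℕ, 2 ≤ k → ∀ ω, checkX k ω =
      if ε k ω = true then -(checkX (U (k - 1) ω) ω) else X k ω)
    (hUrange : ∀ k : ℕ, 2 ≤ k → ∀ ω, U (k - 1) ω ∈ Finset.Icc 1 (k - 1))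
    -- `(εₖ, U[k-1], Xₖ)` is independent of `ℱ_{k-1}`
    (hindep : ∀ k : ℕ, 2 ≤ k → Indep
      (MeasurableSpace.comap (fun ω => (ε k ω, U (k - 1) ω, X k ω)) inferInstance)
      (ℱ (k - 1)) P)
    -- `(εₖ, U[k-1])` is independent of `Xₖ`
    (hindep' : ∀ k : ℕ, 2 ≤ k →
      IndepFun (fun ω => (ε k ω, U (k - 1) ω)) (X k) P)
    -- `εₖ` is Bernoulli(`p`), `U[k-1]` uniform, mutually independent
    (hlaw : ∀ k : ℕ, 2 ≤ k → ∀ j ∈ Finset.Icc 1 (k - 1),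
      P {ω | ε k ω = true ∧ U (k - 1) ω = j} = ENNReal.ofReal (p / (k - 1 : ℕ)))
    (hlaw' : ∀ k : ℕ, 2 ≤ k → P {ω | ε k ω = false} = ENNReal.ofReal (1 - p))
    -- the steps are centred with variance `σ²`
    (hXcent : ∀ k, ∫ ω, X k ω ∂P = 0)
    (hXvar : ∀ k, ∫ ω, (X k ω) ^ 2 ∂P = σ ^ 2) :
    ∀ k : ℕ, 2 ≤ k →
      P[fun ω => checkX k ω * hatX k ω | ℱ (k - 1)]
        =ᵐ[P] fun ω =>
          (1 - p) * σ ^ 2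
            - (p / ((k : ℝ) - 1)) * ∑ j ∈ Finset.Icc 1 (k - 1), checkX j ω * hatX j ω := by
  intro k hk
  obtain ⟨hp0, hp1⟩ := hp
  have hmle : ℱ (k - 1) ≤ mΩ := ℱ.le _
  set T : Ω → Bool × ℕ × ℝ := fun ω => (ε k ω, U (k - 1) ω, X k ω) with hT
  have hTmeas : Measurable T := (hεmeas k).prodMk ((hUmeas (k - 1)).prodMk (hXmeas k))
  have hmcle : MeasurableSpace.comap T inferInstance ≤ mΩ := measurable_iff_comap_le.mp hTmeas
  have hTc : Measurable[MeasurableSpace.comap T inferInstance] T :=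
    measurable_iff_comap_le.mpr le_rfl
  set A : Ω → ℝ := fun ω => if ε k ω = true then 0 else (X k ω) ^ 2 with hA
  set c : ℕ → Ω → ℝ := fun j ω => -(checkX j ω * hatX j ω) with hc
  set B : ℕ → Ω → ℝ := fun j ω => if ε k ω = true ∧ U (k - 1) ω = j then 1 else 0 with hB
  set q : ℝ := p / ((k - 1 : ℕ) : ℝ) with hq
  have hq0 : 0 ≤ q := div_nonneg hp0.le (Nat.cast_nonneg _)
  have hcast : ((k - 1 : ℕ) : ℝ) = (k : ℝ) - 1 := by
    have h1 : (1 : ℕ) ≤ k := by omega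
    push_cast [Nat.cast_sub h1]; ring
  -- measurability of A, B wrt mc
  have hA_mc : StronglyMeasurable[MeasurableSpace.comap T inferInstance] A := by
    have hg : Measurable (fun x : Bool × ℕ × ℝ => if x.1 = true then (0 : ℝ) else x.2.2 ^ 2) := by
      refine Measurable.ite ?_ measurable_const (measurable_snd.snd.pow_const 2)
      exact measurable_fst (measurableSet_singleton true)
    exact (hg.comp hTc).stronglyMeasurable
  have hB_mc : ∀ j, StronglyMeasurable[MeasurableSpace.comap T inferInstance] (B j) := by
    intro j
    have hg : Measurable (fun x : Bool × ℕ × ℝ =>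
        if x.1 = true ∧ x.2.1 = j then (1 : ℝ) else 0) := by
      refine Measurable.ite ?_ measurable_const measurable_const
      exact (measurable_fst (measurableSet_singleton true)).inter
        ((measurable_fst.comp measurable_snd) (measurableSet_singleton j))
    exact (hg.comp hTc).stronglyMeasurable
  -- integrability
  have hXsq_int : Integrable (fun ω => (X k ω) ^ 2) P := (hXL2 k).integrable_sq
  have hA_int : Integrable A P := by
    refine hXsq_int.mono' (hA_mc.mono hmcle).aestronglyMeasurable (ae_of_all _ fun ω => ?_)
    by_cases h : ε k ω = true <;>
      simp [hA, h, abs_of_nonneg (sq_nonneg (X k ω)), sq_nonneg (X k ω)]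
  have hBset : ∀ j : ℕ, MeasurableSet[mΩ] {ω | ε k ω = true ∧ U (k - 1) ω = j} := fun j =>
    (hεmeas k (measurableSet_singleton true)).inter (hUmeas (k - 1) (measurableSet_singleton j))
  have hBrep : ∀ j, B j =
      Set.indicator {ω | ε k ω = true ∧ U (k - 1) ω = j} (fun _ => (1 : ℝ)) := by
    intro j; funext ω
    by_cases h : ε k ω = true ∧ U (k - 1) ω = j <;> simp [hB, h, Set.indicator_apply]
  have hB_int : ∀ j, Integrable (B j) P := fun j => by
    rw [hBrep j]; exact (integrable_const 1).indicator (hBset j)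
  have hc_int : ∀ j, Integrable (c j) P := fun j =>
    (memL2_mul_integrable' (hcheckL2 j) (hhatL2 j)).neg
  have hcB_int : ∀ j, Integrable (c j * B j) P := by
    intro j
    refine (hc_int j).norm.mono'
      ((hc_int j).aestronglyMeasurable.mul (hB_int j).aestronglyMeasurable)
      (ae_of_all _ fun ω => ?_)
    simp only [Pi.mul_apply, Real.norm_eq_abs, abs_mul]
    by_cases h : ε k ω = true ∧ U (k - 1) ω = j <;>
      simp [hB, h, abs_nonneg]
  -- conditional expectations of A and B j
  have hcondA : P[A | ℱ (k - 1)] =ᵐ[P] fun _ => ∫ ω, A ω ∂P :=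
    condExp_indep_eq hmcle hmle hA_mc (hindep k hk)
  have hcondB : ∀ j, P[B j | ℱ (k - 1)] =ᵐ[P] fun _ => ∫ ω, B j ω ∂P := fun j =>
    condExp_indep_eq hmcle hmle (hB_mc j) (hindep k hk)
  -- integral of B j
  have hintB : ∀ j ∈ Finset.Icc 1 (k - 1), ∫ ω, B j ω ∂P = q := by
    intro j hj
    rw [hBrep j, integral_indicator_const _ (hBset j), measureReal_def, hlaw k hk j hj, smul_eq_mul, mul_one,
      ENNReal.toReal_ofReal hq0]
  -- integral of A
  have hind_rep : (fun ω => if ε k ω = true then (0 : ℝ) else 1) =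
      Set.indicator {ω | ε k ω = false} (fun _ => (1 : ℝ)) := by
    funext ω; cases hω : ε k ω <;> simp [hω, Set.indicator_apply]
  have hεfalse : MeasurableSet[mΩ] {ω | ε k ω = false} :=
    hεmeas k (measurableSet_singleton false)
  have hind_int : Integrable (fun ω => if ε k ω = true then (0 : ℝ) else 1) P := by
    rw [hind_rep]; exact (integrable_const 1).indicator hεfalse
  have hind_val : ∫ ω, (if ε k ω = true then (0 : ℝ) else 1) ∂P = 1 - p := by
    rw [hind_rep, integral_indicator_const _ hεfalse, measureReal_def, hlaw' k hk, smul_eq_mul, mul_one,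
      ENNReal.toReal_ofReal (by linarith)]
  have hIF : IndepFun (fun ω => if ε k ω = true then (0 : ℝ) else 1)
      (fun ω => (X k ω) ^ 2) P := by
    have hφ : Measurable (fun b : Bool × ℕ => if b.1 = true then (0 : ℝ) else 1) := by
      refine Measurable.ite ?_ measurable_const measurable_const
      exact measurable_fst (measurableSet_singleton true)
    have hψ : Measurable (fun x : ℝ => x ^ 2) := measurable_id.pow_const 2
    exact (hindep' k hk).comp hφ hψ
  have hintA : ∫ ω, A ω ∂P = (1 - p) * σ ^ 2 := by
    have hrep : A = (fun ω => if ε k ω = true then (0 : ℝ) else 1) * fun ω => (X k ω) ^ 2 := by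
      funext ω; by_cases h : ε k ω = true <;> simp [hA, h]
    rw [hrep, hIF.integral_mul_eq_mul_integral hind_int.aestronglyMeasurable hXsq_int.aestronglyMeasurable, hind_val, hXvar]
  -- conditional expectation of c j * B j
  have hcond_cB : ∀ j ∈ Finset.Icc 1 (k - 1),
      P[c j * B j | ℱ (k - 1)] =ᵐ[P] fun ω => c j ω * q := by
    intro j hj
    have hjle : j ≤ k - 1 := (Finset.mem_Icc.mp hj).2
    have hf_m : StronglyMeasurable[ℱ (k - 1)] (c j) :=
      (((hcheckadapt j).mono (ℱ.mono hjle) le_rfl).mul ((hhatadapt j).mono (ℱ.mono hjle) le_rfl)).neg.stronglyMeasurable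
    have h1 := condExp_mul_of_stronglyMeasurable_left hf_m (hcB_int j) (hB_int j)
    filter_upwards [h1, hcondB j] with ω h1ω h2ω
    rw [h1ω, Pi.mul_apply, h2ω, hintB j hj]
  -- decomposition
  have hgE : (fun ω => checkX k ω * hatX k ω) =
      A + ∑ j ∈ Finset.Icc 1 (k - 1), c j * B j := by
    funext ω
    simp only [Pi.add_apply, Finset.sum_apply, Pi.mul_apply]
    by_cases hε : ε k ω = true
    · have hmem := hUrange k hk ω
      rw [hcheckdef k hk ω, hhatdef k hk ω]
      simp only [hε, if_true, hA, hc, hB, true_and, mul_ite, mul_one, mul_zero, ite_true]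
      rw [Finset.sum_ite_eq _ (U (k - 1) ω) (fun j => -(checkX j ω * hatX j ω)), if_pos hmem]
      ring
    · rw [hcheckdef k hk ω, hhatdef k hk ω]
      simp only [hε, if_false, hA, hc, hB, false_and, mul_ite, mul_one, mul_zero, ite_false]
      simp [sq]
  -- putting it together
  have hsum_int : Integrable (∑ j ∈ Finset.Icc 1 (k - 1), c j * B j) P :=
    integrable_finset_sum' _ fun j _ => hcB_int j
  have hadd := condExp_add (μ := P) (m := ℱ (k - 1)) hA_int hsum_int
  have hsumc := condExp_finset_sum (μ := P) (m := ℱ (k - 1))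
    (s := Finset.Icc 1 (k - 1)) (f := fun j => c j * B j) (fun j _ => hcB_int j)
  have hA' : P[A | ℱ (k - 1)] =ᵐ[P] fun _ => (1 - p) * σ ^ 2 := by
    rw [hintA] at hcondA; exact hcondA
  have hptw : ∀ᵐ ω ∂P, ∀ j, j ∈ Finset.Icc 1 (k - 1) →
      (P[c j * B j | ℱ (k - 1)]) ω = c j ω * q := by
    rw [ae_all_iff]
    intro j
    by_cases hj : j ∈ Finset.Icc 1 (k - 1)
    · filter_upwards [hcond_cB j hj] with ω hω _; exact hω
    · filter_upwards with ω hj'; exact absurd hj' hj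
  rw [hgE]
  filter_upwards [hadd, hsumc, hA', hptw] with ω h1 h2 h3 h4
  rw [h1, Pi.add_apply, h3, h2, Finset.sum_apply]
  have hsum_eq : ∑ j ∈ Finset.Icc 1 (k - 1), (P[c j * B j | ℱ (k - 1)]) ω
      = ∑ j ∈ Finset.Icc 1 (k - 1), c j ω * q :=
    Finset.sum_congr rfl fun j hj => h4 j hj
  rw [hsum_eq]
  simp only [hc, hq, hcast, neg_mul, Finset.sum_neg_distrib, ← Finset.sum_mul]
  ring
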